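/- arXiv:0804.1012 — 4 statements merged into one kernel-verified Lean document; each statement's English description precedes it below -/
import Mathlib

section
/- In the ring ℚ[x, y]/(x² + y² - 1) of trigonometric polynomials (corresponding to σ = -1, where the polynomial λ² + 1 is irreducible over ℚ), the ideal (S₁, C₁ + 1), i.e. the ideal generated by the images of y and x + 1, is not principal. -/
open MvPolynomial Polynomial

noncomputable section Scratch

def qq : Polynomial (Polynomial ℚ) := Polynomial.X ^ 2 + Polynomial.C (Polynomial.X ^ 2 - 1)

lemma qq_monic : qq.Monic := by
  apply Polynomial.monic_X_pow_add
  calc degree (Polynomial.C ((Polynomial.X:Polynomial ℚ) ^ 2 - 1)) ≤ 0 := degree_C_le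
  _ < 2 := by norm_num

lemma qq_natDegree : qq.natDegree = 2 := by
  unfold qq
  compute_degree!

abbrev of' : Polynomial ℚ →+* AdjoinRoot qq := AdjoinRoot.of qq
abbrev rt : AdjoinRoot qq := AdjoinRoot.root qq

lemma of_inj : Function.Injective of' := by
  intro a b h
  have : AdjoinRoot.mk qq (Polynomial.C a - Polynomial.C b) = 0 := by
    rw [map_sub, AdjoinRoot.mk_C, AdjoinRoot.mk_C, sub_eq_zero]; exact h
  rw [← map_sub, AdjoinRoot.mk_eq_zero] at this
  by_contra hab
  have hC : (Polynomial.C (a - b) : Polynomial (Polynomial ℚ)) ≠ 0 := by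
    simpa [sub_eq_zero] using hab
  rw [map_sub] at this
  rw [map_sub] at hC
  have := Polynomial.natDegree_le_of_dvd this hC
  rw [qq_natDegree] at this
  simp [Polynomial.natDegree_C] at this

lemma root_sq : rt ^ 2 = of' (1 - Polynomial.X ^ 2) := by
  have h := AdjoinRoot.mk_self (f := qq)
  have hh : (AdjoinRoot.mk qq) qq = rt ^ 2 + of' (Polynomial.X ^ 2 - 1) := by
    unfold qq
    rw [map_add, map_pow, AdjoinRoot.mk_X, AdjoinRoot.mk_C]
    rfl
  rw [h] at hh
  have h2 : of' (1 - Polynomial.X ^ 2) = - of' (Polynomial.X ^ 2 - 1) := by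
    rw [← map_neg]
    congr 1
    ring
  rw [h2]
  linear_combination -hh

lemma exists_rep (z : AdjoinRoot qq) : ∃ a b : Polynomial ℚ, z = of' a + of' b * rt := by
  induction z using AdjoinRoot.induction_on with
  | ih P =>
    refine ⟨(P %ₘ qq).coeff 0, (P %ₘ qq).coeff 1, ?_⟩
    have hdeg : (P %ₘ qq).degree ≤ 1 := by
      have := Polynomial.degree_modByMonic_lt P qq_monic
      have h2 : qq.degree = 2 := by
        rw [Polynomial.degree_eq_natDegree qq_monic.ne_zero, qq_natDegree]; rfl
      rw [h2] at this
      exact Order.le_of_lt_succ (by exact_mod_cast this)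
    have hrep := Polynomial.eq_X_add_C_of_degree_le_one hdeg
    have hmod : AdjoinRoot.mk qq P = AdjoinRoot.mk qq (P %ₘ qq) := by
      conv_lhs => rw [← Polynomial.modByMonic_add_div P qq]
      rw [map_add, map_mul, AdjoinRoot.mk_self, zero_mul, add_zero]
    rw [hmod, hrep]
    simp [AdjoinRoot.mk_C, AdjoinRoot.mk_X]
    ring

def conj : AdjoinRoot qq →+* AdjoinRoot qq :=
  AdjoinRoot.lift of' (-rt) (by
    show Polynomial.eval₂ of' (-rt) qq = 0
    rw [show Polynomial.eval₂ of' (-rt) qq = Polynomial.eval₂ of' (-rt)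
      (Polynomial.X ^ 2 + Polynomial.C (Polynomial.X ^ 2 - 1)) from rfl]
    rw [Polynomial.eval₂_add, Polynomial.eval₂_pow, Polynomial.eval₂_X, Polynomial.eval₂_C]
    rw [neg_sq, root_sq]
    have h2 : of' (1 - Polynomial.X ^ 2) = - of' (Polynomial.X ^ 2 - 1) := by
      rw [← map_neg]
      congr 1
      ring
    rw [h2]
    exact neg_add_cancel _)

@[simp] lemma conj_of (a : Polynomial ℚ) : conj (of' a) = of' a := AdjoinRoot.lift_of _
@[simp] lemma conj_root : conj rt = -rt := AdjoinRoot.lift_root _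

lemma norm_formula (a b : Polynomial ℚ) :
    (of' a + of' b * rt) * conj (of' a + of' b * rt)
      = of' (a ^ 2 + b ^ 2 * (Polynomial.X ^ 2 - 1)) := by
  rw [map_add, map_mul, conj_of, conj_of, conj_root]
  have : (of' a + of' b * rt) * (of' a + of' b * -rt)
      = of' a * of' a - of' b * of' b * rt ^ 2 := by ring
  rw [this, root_sq, ← map_mul, ← map_mul, ← map_mul, ← map_sub]
  congr 1
  ring

def eps : AdjoinRoot qq →+* ℚ :=
  AdjoinRoot.lift (Polynomial.evalRingHom (-1 : ℚ)) 0 (by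
    show Polynomial.eval₂ _ _ qq = 0
    unfold qq
    rw [Polynomial.eval₂_add, Polynomial.eval₂_pow, Polynomial.eval₂_X, Polynomial.eval₂_C]
    simp)

@[simp] lemma eps_of (a : Polynomial ℚ) : eps (of' a) = a.eval (-1) := AdjoinRoot.lift_of _
@[simp] lemma eps_root : eps rt = 0 := AdjoinRoot.lift_root _


lemma norm_rt : rt * conj rt = of' (Polynomial.X ^ 2 - 1) := by
  rw [conj_root]
  have : rt * -rt = -(rt ^ 2) := by ring
  rw [this, root_sq, ← map_neg]
  congr 1
  ring

lemma key : ¬ (Ideal.span {rt, of' (Polynomial.X + 1)}).IsPrincipal := by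
  rintro ⟨f, hf⟩
  rw [Ideal.submodule_span_eq] at hf
  obtain ⟨a, b, hab⟩ := exists_rep f
  set Nf : Polynomial ℚ := a ^ 2 + b ^ 2 * (Polynomial.X ^ 2 - 1) with hNf
  have hfN : f * conj f = of' Nf := by rw [hab]; exact norm_formula a b
  -- rt ∈ (f)
  have hr : rt ∈ Ideal.span {f} := by
    rw [← hf]; exact Ideal.subset_span (by simp)
  have hx : of' (Polynomial.X + 1) ∈ Ideal.span {f} := by
    rw [← hf]; exact Ideal.subset_span (by simp)
  rw [Ideal.mem_span_singleton'] at hr hx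
  obtain ⟨g, hg⟩ := hr
  obtain ⟨h, hh⟩ := hx
  obtain ⟨c, d, hcd⟩ := exists_rep g
  obtain ⟨u, v, huv⟩ := exists_rep h
  set Ng : Polynomial ℚ := c ^ 2 + d ^ 2 * (Polynomial.X ^ 2 - 1) with hNg
  set Nh : Polynomial ℚ := u ^ 2 + v ^ 2 * (Polynomial.X ^ 2 - 1) with hNh
  have hgN : g * conj g = of' Ng := by rw [hcd]; exact norm_formula c d
  have hhN : h * conj h = of' Nh := by rw [huv]; exact norm_formula u v
  -- X^2 - 1 = Ng * Nf
  have e1 : (Polynomial.X ^ 2 - 1 : Polynomial ℚ) = Ng * Nf := by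
    apply of_inj
    rw [map_mul, ← hgN, ← hfN, ← norm_rt, ← hg]
    ring_nf
    rw [map_mul]
    ring
  have e2 : ((Polynomial.X + 1) ^ 2 : Polynomial ℚ) = Nh * Nf := by
    apply of_inj
    rw [map_mul, ← hhN, ← hfN]
    have : of' ((Polynomial.X + 1) ^ 2) = of' (Polynomial.X + 1) * conj (of' (Polynomial.X + 1)) := by
      rw [conj_of, ← map_mul]
      congr 1
      ring
    rw [this, ← hh]
    rw [map_mul]
    ring
  -- f ∈ (rt, X+1) so eps f = 0, hence a.eval (-1) = 0
  have hfmem : f ∈ Ideal.span {rt, of' (Polynomial.X + 1)} := by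
    rw [hf]; exact Ideal.subset_span (by simp)
  rw [Ideal.mem_span_pair] at hfmem
  obtain ⟨w, z, hwz⟩ := hfmem
  have heps : eps f = 0 := by
    rw [← hwz, map_add, map_mul, map_mul, eps_root, mul_zero, eps_of]
    simp
  have ha1 : a.eval (-1) = 0 := by
    rw [hab, map_add, map_mul, eps_root, mul_zero, add_zero, eps_of] at heps
    exact heps
  -- (X+1) ∣ Nf
  have hXa : (Polynomial.X + 1 : Polynomial ℚ) ∣ a := by
    have := (Polynomial.dvd_iff_isRoot (p := a) (a := (-1 : ℚ))).mpr ha1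
    have hX1 : (Polynomial.X - Polynomial.C (-1 : ℚ)) = Polynomial.X + 1 := by
      rw [map_neg, map_one, sub_neg_eq_add]
    rwa [hX1] at this
  have hXNf : (Polynomial.X + 1 : Polynomial ℚ) ∣ Nf := by
    obtain ⟨t, ht⟩ := hXa
    refine ⟨t ^ 2 * (Polynomial.X + 1) + b ^ 2 * (Polynomial.X - 1), ?_⟩
    rw [hNf, ht]
    ring
  obtain ⟨m, hm⟩ := hXNf
  have hX1ne : (Polynomial.X + 1 : Polynomial ℚ) ≠ 0 := by
    intro hcon
    have := congrArg (Polynomial.eval 0) hcon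
    simp at this
  -- m ∣ X - 1
  have hm1 : m ∣ (Polynomial.X - 1 : Polynomial ℚ) := by
    have : (Polynomial.X + 1 : Polynomial ℚ) * m ∣ (Polynomial.X + 1) * (Polynomial.X - 1) := by
      rw [← hm]
      refine Dvd.intro_left Ng ?_
      rw [← e1]
      ring
    exact (mul_dvd_mul_iff_left hX1ne).mp this
  have hm2 : m ∣ (Polynomial.X + 1 : Polynomial ℚ) := by
    have : (Polynomial.X + 1 : Polynomial ℚ) * m ∣ (Polynomial.X + 1) * (Polynomial.X + 1) := by
      rw [← hm]
      refine Dvd.intro_left Nh ?_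
      rw [← e2]
      ring
    exact (mul_dvd_mul_iff_left hX1ne).mp this
  have hm2' : m ∣ (Polynomial.C 2 : Polynomial ℚ) := by
    have : (Polynomial.C 2 : Polynomial ℚ) = (Polynomial.X + 1) - (Polynomial.X - 1) := by
      rw [map_ofNat]
      ring
    rw [this]
    exact dvd_sub hm2 hm1
  have hmu : IsUnit m := by
    refine isUnit_of_dvd_unit hm2' ?_
    rw [Polynomial.isUnit_C]
    norm_num
  obtain ⟨cc, hcc, hccm⟩ := Polynomial.isUnit_iff.mp hmu
  -- Nf = (X+1) * C cc
  rw [← hccm] at hm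
  have hev1 := congrArg (Polynomial.eval (1 : ℚ)) hm
  have hev3 := congrArg (Polynomial.eval (-3 : ℚ)) hm
  simp [hNf] at hev1 hev3
  have hccne : cc ≠ 0 := hcc.ne_zero
  have hccpos : 0 < cc := by
    rcases hccne.lt_or_gt with hlt | hgt
    · nlinarith [sq_nonneg (a.eval (1:ℚ))]
    · exact hgt
  nlinarith [sq_nonneg (a.eval (-3:ℚ)), sq_nonneg (b.eval (-3:ℚ))]

abbrev pp : MvPolynomial (Fin 2) ℚ := (X 0 : MvPolynomial (Fin 2) ℚ) ^ 2 + X 1 ^ 2 - 1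

def phi : MvPolynomial (Fin 2) ℚ →+* AdjoinRoot qq :=
  MvPolynomial.eval₂Hom (of'.comp Polynomial.C) ![of' Polynomial.X, rt]

lemma phi_p : phi pp = 0 := by
  unfold phi pp
  rw [map_sub, map_add, map_pow, map_pow, map_one]
  rw [MvPolynomial.eval₂Hom_X', MvPolynomial.eval₂Hom_X']
  have h0 : (![of' Polynomial.X, rt] : Fin 2 → AdjoinRoot qq) 0 = of' Polynomial.X := rfl
  have h1 : (![of' Polynomial.X, rt] : Fin 2 → AdjoinRoot qq) 1 = rt := rfl
  rw [h0, h1, root_sq, ← map_pow, ← map_add, ← map_one of', ← map_sub]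
  have : (Polynomial.X ^ 2 + (1 - Polynomial.X ^ 2) - 1 : Polynomial ℚ) = 0 := by ring
  rw [this, map_zero]

def phibar : MvPolynomial (Fin 2) ℚ ⧸ Ideal.span {pp} →+* AdjoinRoot qq :=
  Ideal.Quotient.lift (Ideal.span {pp}) phi (by
    intro x hx
    rw [Ideal.mem_span_singleton] at hx
    obtain ⟨k, rfl⟩ := hx
    rw [map_mul, phi_p, zero_mul])

theorem stmt_7 :
    ¬ (Ideal.span
        { Ideal.Quotient.mk
            (Ideal.span {(X 0 : MvPolynomial (Fin 2) ℚ) ^ 2 + X 1 ^ 2 - 1}) (X 1),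
          Ideal.Quotient.mk
            (Ideal.span {(X 0 : MvPolynomial (Fin 2) ℚ) ^ 2 + X 1 ^ 2 - 1}) (X 0 + 1)
        }).IsPrincipal := by
  rintro ⟨t, ht⟩
  rw [Ideal.submodule_span_eq] at ht
  apply key
  refine ⟨phibar t, ?_⟩
  rw [Ideal.submodule_span_eq]
  have hmap := congrArg (Ideal.map phibar) ht
  rw [Ideal.map_span, Ideal.map_span, Set.image_insert_eq, Set.image_singleton,
    Set.image_singleton] at hmap
  have hg1 : phibar (Ideal.Quotient.mk
      (Ideal.span {(X 0 : MvPolynomial (Fin 2) ℚ) ^ 2 + X 1 ^ 2 - 1}) (X 1)) = rt := by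
    show phi (X 1) = rt
    unfold phi
    rw [MvPolynomial.eval₂Hom_X']
    rfl
  have hg2 : phibar (Ideal.Quotient.mk
      (Ideal.span {(X 0 : MvPolynomial (Fin 2) ℚ) ^ 2 + X 1 ^ 2 - 1}) (X 0 + 1))
      = of' (Polynomial.X + 1) := by
    show phi (X 0 + 1) = of' (Polynomial.X + 1)
    unfold phi
    rw [map_add, map_one, MvPolynomial.eval₂Hom_X']
    have h0 : (![of' Polynomial.X, rt] : Fin 2 → AdjoinRoot qq) 0 = of' Polynomial.X := rfl
    rw [h0, map_add, map_one]
  rw [hg1, hg2] at hmap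
  exact hmap

end Scratch
end

section
/- Let R be a Bézout domain and Σ a finitely presented R-module. Then Σ decomposes as a direct sum Σ = t(Σ) ⊕ Σ/t(Σ), where t(Σ) is the torsion submodule (which is finitely presented torsion) and Σ/t(Σ) is free of finite rank. In particular, a finitely presented module over a Bézout domain is free if and only if it is torsion free. -/
open Function

section Split

variable {R M Q : Type*} [CommRing R] [AddCommGroup M] [Module R M]
  [AddCommGroup Q] [Module R Q]

/-- Splitting of a linear surjection with a section. -/
noncomputable def splitEquiv (q : M →ₗ[R] Q) (s : Q →ₗ[R] M)
    (hs : ∀ y, q (s y) = y) : M ≃ₗ[R] (LinearMap.ker q) × Q where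
  toFun x := (⟨x - s (q x), by simp [LinearMap.mem_ker, hs]⟩, q x)
  invFun p := p.1.1 + s p.2
  left_inv x := by simp
  right_inv p := by
    obtain ⟨⟨k, hk⟩, y⟩ := p
    simp only [LinearMap.mem_ker] at hk
    simp [hk, hs]
  map_add' x y := by ext <;> simp <;> abel
  map_smul' r x := by ext <;> simp [smul_sub]

end Split

section Pi

variable (R : Type*) [CommRing R] [IsDomain R] [IsBezout R]

/-- A finitely generated module that embeds into `Rⁿ` over a Bézout domain is free. -/
theorem free_of_inj_pi : ∀ (n : ℕ) (M : Type*) [AddCommGroup M] [Module R M]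
    [Module.Finite R M] (f : M →ₗ[R] (Fin n → R)), Injective f → Module.Free R M := by
  intro n
  induction n with
  | zero =>
    intro M _ _ _ f hf
    have h0 : ∀ x : M, x = 0 := fun x => hf (Subsingleton.elim _ _)
    have : Subsingleton M := ⟨fun a b => by rw [h0 a, h0 b]⟩
    exact Module.Free.of_subsingleton R M
  | succ n IH =>
    intro M _ _ _ f hf
    set g : M →ₗ[R] R := (LinearMap.proj (Fin.last n)).comp f with hg
    have hfg : (LinearMap.range g).FG := by
      rw [LinearMap.range_eq_map]
      exact (Module.Finite.fg_top (R := R) (M := M)).map g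
    obtain ⟨a, ha⟩ := (IsBezout.isPrincipal_of_FG _ hfg).principal
    by_cases ha0 : a = 0
    · -- g = 0; f lands in first n coordinates
      subst ha0
      have hgz : ∀ x, g x = 0 := by
        intro x
        have : g x ∈ LinearMap.range g := LinearMap.mem_range_self _ x
        rw [ha, Submodule.mem_span_singleton] at this
        obtain ⟨c, hc⟩ := this
        rw [smul_zero] at hc
        exact hc.symm
      set f' : M →ₗ[R] (Fin n → R) :=
        LinearMap.pi (fun i : Fin n => (LinearMap.proj (Fin.castSucc i)).comp f) with hf'
      refine IH M f' ?_
      rw [injective_iff_map_eq_zero]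
      intro x hx
      apply hf
      rw [map_zero]
      funext j
      refine Fin.lastCases ?_ ?_ j
      · exact hgz x
      · intro i
        exact congrFun hx i
    · -- split off a free rank-1 quotient
      have haR : a ∈ LinearMap.range g := by rw [ha]; exact Submodule.mem_span_singleton_self a
      obtain ⟨m, hm⟩ := haR
      have hspan : LinearMap.range g = (R ∙ a) := by rw [ha]
      set e1 : R ≃ₗ[R] (R ∙ a) := LinearEquiv.toSpanNonzeroSingleton R R a ha0 with he1
      set h : M →ₗ[R] R :=
        e1.symm.toLinearMap.comp (g.codRestrict (R ∙ a)
          (fun x => hspan ▸ LinearMap.mem_range_self g x)) with hh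
      have hval : ∀ x, (e1 (h x) : R) = g x := by
        intro x
        simp only [hh, LinearMap.comp_apply, LinearEquiv.coe_coe,
          LinearEquiv.apply_symm_apply, LinearMap.codRestrict_apply]
      have hker : ∀ x, h x = 0 ↔ g x = 0 := by
        intro x
        constructor
        · intro hx
          rw [← hval x, hx, map_zero, ZeroMemClass.coe_zero]
        · intro hx
          have h1 : (e1 (h x) : R) = 0 := by rw [hval x, hx]
          have h2 : e1 (h x) = 0 := Subtype.ext h1
          exact e1.injective (by rw [map_zero]; exact h2)
      have hm1 : h m = 1 := by
        apply e1.injective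
        apply Subtype.ext
        rw [hval m, hm, he1]
        exact (congrArg Subtype.val (LinearEquiv.toSpanNonzeroSingleton_one R R a ha0)).symm
      set s : R →ₗ[R] M := LinearMap.toSpanSingleton R M m with hs
      have hsec : ∀ y, h (s y) = y := by
        intro y
        simp [hs, LinearMap.toSpanSingleton, map_smul, hm1]
      set e : M ≃ₗ[R] (LinearMap.ker h) × R := splitEquiv h s hsec with he
      haveI : Module.Finite R ((LinearMap.ker h) × R) := Module.Finite.equiv e
      haveI : Module.Finite R (LinearMap.ker h) :=
        Module.Finite.of_surjective (LinearMap.fst R (LinearMap.ker h) R) Prod.fst_surjective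
      haveI : Module.Free R (LinearMap.ker h) := by
        refine IH (LinearMap.ker h)
          (LinearMap.pi (fun i : Fin n =>
            (LinearMap.proj (Fin.castSucc i)).comp (f.comp (LinearMap.ker h).subtype))) ?_
        rw [injective_iff_map_eq_zero]
        intro x hx
        apply Subtype.ext
        rw [ZeroMemClass.coe_zero]
        apply hf
        rw [map_zero]
        funext j
        refine Fin.lastCases ?_ ?_ j
        · exact (hker x.1).mp x.2
        · intro i
          exact congrFun hx i
      exact Module.Free.of_equiv e.symm

end Pi

section Emb

open nonZeroDivisors Submodule

theorem exists_inj_pi (R : Type*) [CommRing R] [IsDomain R]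
    (M : Type*) [AddCommGroup M] [Module R M] [Module.Finite R M] [NoZeroSMulDivisors R M] :
    ∃ (n : ℕ) (f : M →ₗ[R] (Fin n → R)), Injective f := by
  classical
  let K := FractionRing R
  let ι : M →ₗ[R] LocalizedModule R⁰ M := LocalizedModule.mkLinearMap R⁰ M
  have hι : Injective ι := by
    rw [← LinearMap.ker_eq_bot, eq_bot_iff]
    intro x hx
    obtain ⟨r, hr, hrx⟩ := LocalizedModule.mem_ker_mkLinearMap_iff.mp hx
    have hr0 : r ≠ 0 := mem_nonZeroDivisors_iff_ne_zero.mp hr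
    simpa using (smul_eq_zero.mp hrx).resolve_left hr0
  obtain ⟨s, hs⟩ := Module.Finite.fg_top (R := R) (M := M)
  haveI : Module.Finite K (LocalizedModule R⁰ M) := ⟨⟨s.image ι, by
    rw [Finset.coe_image]
    exact span_eq_top_of_isLocalizedModule K R⁰ ι hs⟩⟩
  set d := Module.finrank K (LocalizedModule R⁰ M) with hd
  let b : Module.Basis (Fin d) K (LocalizedModule R⁰ M) := Module.finBasis K (LocalizedModule R⁰ M)
  let φ : M →ₗ[R] (Fin d → K) := ((b.equivFun : _ ≃ₗ[K] _).restrictScalars R).toLinearMap.comp ι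
  have hφ : Injective φ := ((b.equivFun.restrictScalars R).injective).comp hι
  obtain ⟨r, hr⟩ := IsLocalization.exist_integer_multiples R⁰
    (s ×ˢ (Finset.univ : Finset (Fin d))) (fun p => φ p.1 p.2)
  let ψ0 : M →ₗ[R] (Fin d → K) := (r : R) • φ
  have hψ0 : Injective ψ0 := by
    rw [injective_iff_map_eq_zero]
    intro x hx
    apply hφ
    rw [map_zero]
    funext i
    have : (r : R) • φ x i = 0 := congrFun hx i
    rw [Algebra.smul_def, mul_eq_zero] at this
    rcases this with h | h
    · exact absurd h ((map_ne_zero_iff _ (IsFractionRing.injective R K)).mpr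
        (mem_nonZeroDivisors_iff_ne_zero.mp r.2))
    · exact h
  let ℓ : (Fin d → R) →ₗ[R] (Fin d → K) :=
    LinearMap.pi (fun i => (Algebra.linearMap R K).comp (LinearMap.proj i))
  have hℓ : Injective ℓ := by
    rw [injective_iff_map_eq_zero]
    intro v hv
    funext i
    exact (map_eq_zero_iff _ (IsFractionRing.injective R K)).mp (congrFun hv i)
  have hle : LinearMap.range ψ0 ≤ LinearMap.range ℓ := by
    rw [LinearMap.range_eq_map, ← hs, Submodule.map_span, Submodule.span_le]
    rintro _ ⟨x, hx, rfl⟩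
    have hint : ∀ i : Fin d, ∃ c : R, algebraMap R K c = (r : R) • φ x i := by
      intro i
      obtain ⟨c, hc⟩ := hr (x, i) (Finset.mem_product.mpr ⟨hx, Finset.mem_univ i⟩)
      exact ⟨c, hc⟩
    choose c hc using hint
    refine ⟨c, ?_⟩
    funext i
    simpa [ℓ, ψ0] using hc i
  let eℓ : (Fin d → R) ≃ₗ[R] LinearMap.range ℓ := LinearEquiv.ofInjective ℓ hℓ
  refine ⟨d, eℓ.symm.toLinearMap.comp
    (ψ0.codRestrict (LinearMap.range ℓ) (fun x => hle (LinearMap.mem_range_self _ x))), ?_⟩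
  refine eℓ.symm.injective.comp ?_
  intro x y hxy
  exact hψ0 (congrArg Subtype.val hxy)

end Emb

theorem free_of_tf (R : Type*) [CommRing R] [IsDomain R] [IsBezout R]
    (M : Type*) [AddCommGroup M] [Module R M] [Module.Finite R M] [NoZeroSMulDivisors R M] :
    Module.Free R M := by
  obtain ⟨n, f, hf⟩ := exists_inj_pi R M
  exact free_of_inj_pi R n M f hf

theorem stmt_11 (R : Type*) [CommRing R] [IsDomain R] [IsBezout R]
    (M : Type*) [AddCommGroup M] [Module R M] [Module.FinitePresentation R M] :
    Nonempty (M ≃ₗ[R] (Submodule.torsion R M) × (M ⧸ Submodule.torsion R M)) ∧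
      Module.FinitePresentation R (Submodule.torsion R M) ∧
      Module.Free R (M ⧸ Submodule.torsion R M) ∧
      Module.Finite R (M ⧸ Submodule.torsion R M) ∧
      (Module.Free R M ↔ Submodule.torsion R M = ⊥) := by
  haveI hQfin : Module.Finite R (M ⧸ Submodule.torsion R M) := inferInstance
  haveI hfree : Module.Free R (M ⧸ Submodule.torsion R M) := by
    haveI : NoZeroSMulDivisors R (M ⧸ Submodule.torsion R M) :=
      noZeroSMulDivisors_iff_right_eq_zero_of_smul.mpr fun r hr m h => (smul_eq_zero_iff_right hr).mp h
    exact free_of_tf R _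
  have hq : Surjective (Submodule.torsion R M).mkQ := Submodule.mkQ_surjective _
  obtain ⟨s, hsec⟩ := Module.projective_lifting_property (Submodule.torsion R M).mkQ LinearMap.id hq
  have hs' : ∀ y, (Submodule.torsion R M).mkQ (s y) = y := fun y => by
    simpa using LinearMap.congr_fun hsec y
  let e0 := splitEquiv _ s hs'
  let e2 : (LinearMap.ker (Submodule.torsion R M).mkQ) ≃ₗ[R] Submodule.torsion R M :=
    LinearEquiv.ofEq _ _ (Submodule.ker_mkQ _)
  let e : M ≃ₗ[R] (Submodule.torsion R M) × (M ⧸ Submodule.torsion R M) :=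
    e0.trans (e2.prodCongr (LinearEquiv.refl R _))
  refine ⟨⟨e⟩, ?_, hfree, hQfin, ?_⟩
  · let p : M →ₗ[R] Submodule.torsion R M := (LinearMap.fst R _ _).comp e.toLinearMap
    have hp : Surjective p := Prod.fst_surjective.comp e.surjective
    refine Module.finitePresentation_of_surjective p hp ?_
    have hkp : LinearMap.ker p = Submodule.map e.symm.toLinearMap
        (LinearMap.ker (LinearMap.fst R (Submodule.torsion R M) (M ⧸ Submodule.torsion R M))) := by
      rw [LinearMap.ker_comp, ← Submodule.comap_equiv_eq_map_symm]
    have hfg : (LinearMap.ker (LinearMap.fst R (Submodule.torsion R M)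
        (M ⧸ Submodule.torsion R M))).FG := by
      rw [LinearMap.ker_fst, LinearMap.range_eq_map]
      exact (Module.Finite.fg_top (R := R)).map _
    rw [hkp]
    exact hfg.map _
  · constructor
    · intro hF
      exact Submodule.isTorsionFree_iff_torsion_eq_bot.mp inferInstance
    · intro hbot
      haveI : Module.IsTorsionFree R M := Submodule.isTorsionFree_iff_torsion_eq_bot.mpr hbot
      haveI : NoZeroSMulDivisors R M :=
        noZeroSMulDivisors_iff_right_eq_zero_of_smul.mpr fun r hr m h => (smul_eq_zero_iff_right hr).mp h
      exact free_of_tf R M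
end

section
/- Over a Bézout domain R, every finitely generated torsion-free R-module is free. -/
open Submodule Set

section Aux

variable {R : Type*} [CommRing R] [IsDomain R] [IsBezout R]

omit [IsBezout R] in
lemma free_of_isPrincipal (I : Ideal R) [I.IsPrincipal] : Module.Free R I := by
  by_cases h : Submodule.IsPrincipal.generator I = 0
  · have hbot : I = ⊥ := (Submodule.IsPrincipal.eq_bot_iff_generator_eq_zero I).mpr h
    subst hbot
    infer_instance
  · set a := Submodule.IsPrincipal.generator I with ha
    have hinj : Function.Injective (LinearMap.toSpanSingleton R R a) := by
      intro x y hxy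
      exact mul_right_cancel₀ h
        (by simpa [LinearMap.toSpanSingleton_apply, smul_eq_mul] using hxy)
    have hrange : LinearMap.range (LinearMap.toSpanSingleton R R a) = I := by
      rw [← LinearMap.span_singleton_eq_range]
      exact Ideal.span_singleton_generator I
    exact Module.Free.of_equiv (hrange ▸ LinearEquiv.ofInjective _ hinj)

lemma free_of_fg_pi : ∀ (n : ℕ) (N : Submodule R (Fin n → R)), N.FG → Module.Free R N := by
  intro n
  induction n with
  | zero =>
    intro N _
    have : Subsingleton N := ⟨fun a b => Subtype.ext (Subsingleton.elim _ _)⟩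
    exact Module.Free.of_subsingleton R N
  | succ n ih =>
    intro N hN
    haveI : Module.Finite R N := Module.Finite.iff_fg.mpr hN
    set π : (Fin (n + 1) → R) →ₗ[R] R := LinearMap.proj (Fin.last n) with hπ
    set f : N →ₗ[R] R := π ∘ₗ N.subtype with hf
    have hIfg : (LinearMap.range f).FG := by
      rw [LinearMap.range_eq_map]
      exact Submodule.FG.map _ (Module.Finite.iff_fg.mp inferInstance)
    haveI : (LinearMap.range f).IsPrincipal := IsBezout.isPrincipal_of_FG _ hIfg
    haveI hIfree : Module.Free R (LinearMap.range f) := free_of_isPrincipal _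
    obtain ⟨g, hg⟩ := Module.projective_lifting_property f.rangeRestrict LinearMap.id
      f.surjective_rangeRestrict
    have hgsec : ∀ i, f.rangeRestrict (g i) = i := fun i => LinearMap.congr_fun hg i
    have hginj : Function.Injective g := by
      intro x y hxy
      have := congrArg f.rangeRestrict hxy
      rwa [hgsec, hgsec] at this
    set q : N →ₗ[R] N := g ∘ₗ f.rangeRestrict with hq
    have hproj : LinearMap.IsProj (LinearMap.range g) q := by
      constructor
      · intro x; exact LinearMap.mem_range_self _ _
      · rintro x ⟨i, rfl⟩
        show g (f.rangeRestrict (g i)) = g i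
        rw [hgsec]
    have hcompl : IsCompl (LinearMap.range g) (LinearMap.ker q) := hproj.isCompl
    haveI hfree1 : Module.Free R (LinearMap.range g) :=
      Module.Free.of_equiv (LinearEquiv.ofInjective g hginj)
    haveI : Module.Finite R (LinearMap.ker q) :=
      Module.Finite.equiv (Submodule.quotientEquivOfIsCompl _ _ hcompl)
    set j : LinearMap.ker q →ₗ[R] (Fin n → R) :=
      (LinearMap.funLeft R R Fin.castSucc) ∘ₗ N.subtype ∘ₗ (LinearMap.ker q).subtype with hj
    have hker : ∀ x : LinearMap.ker q, f x.1 = 0 := by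
      intro x
      have hx : g (f.rangeRestrict x.1) = 0 := LinearMap.mem_ker.mp x.2
      have h0 : f.rangeRestrict x.1 = 0 := hginj (by simpa using hx)
      have := congrArg Subtype.val h0
      simpa using this
    have hjinj : Function.Injective j := by
      intro x y hxy
      apply Subtype.ext
      apply Subtype.ext
      funext i
      refine Fin.lastCases ?_ ?_ i
      · have h1 : f x.1 = 0 := hker x
        have h2 : f y.1 = 0 := hker y
        simp only [hf, hπ, LinearMap.comp_apply, LinearMap.proj_apply,
          Submodule.coe_subtype] at h1 h2
        rw [h1, h2]
      · intro i
        have := congrFun hxy i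
        simpa [hj, LinearMap.funLeft_apply] using this
    have hjfg : (LinearMap.range j).FG := by
      rw [LinearMap.range_eq_map]
      exact Submodule.FG.map _ (Module.Finite.iff_fg.mp inferInstance)
    haveI := ih _ hjfg
    haveI hfree2 : Module.Free R (LinearMap.ker q) :=
      Module.Free.of_equiv (LinearEquiv.ofInjective j hjinj).symm
    exact Module.Free.of_equiv (Submodule.prodEquivOfIsCompl _ _ hcompl)

lemma free_of_fg_of_basis {W : Type*} [AddCommGroup W] [Module R W] {ι : Type*} [Fintype ι]
    (b : Module.Basis ι R W) (N : Submodule R W) (hN : N.FG) : Module.Free R N := by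
  let e : W ≃ₗ[R] (Fin (Fintype.card ι) → R) := (b.reindex (Fintype.equivFin ι)).equivFun
  have hfg : (N.map (e : W →ₗ[R] (Fin (Fintype.card ι) → R))).FG := hN.map _
  haveI := free_of_fg_pi _ _ hfg
  exact Module.Free.of_equiv
    (Submodule.equivMapOfInjective (e : W →ₗ[R] (Fin (Fintype.card ι) → R)) e.injective N).symm

end Aux

theorem stmt_12 (R : Type*) [CommRing R] [IsDomain R] [IsBezout R]
    (M : Type*) [AddCommGroup M] [Module R M] [Module.Finite R M]
    (htf : Submodule.torsion R M = ⊥) :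
    Module.Free R M := by
  classical
  haveI : Module.IsTorsionFree R M := Submodule.isTorsionFree_iff_torsion_eq_bot.mpr htf
  obtain ⟨n, s, hs⟩ := Module.Finite.exists_fin (R := R) (M := M)
  obtain ⟨I, indepI, hI⟩ := exists_maximal_linearIndepOn R s
  let N := span R (range <| (s ∘ (fun x => x) : I → M))
  let sI_basis : Module.Basis I R N := Module.Basis.span indepI
  have exists_a : ∀ i : Fin n, ∃ a : R, a ≠ 0 ∧ a • s i ∈ N := by
    intro i
    by_cases hi : i ∈ I
    · exact ⟨1, one_ne_zero, by rw [one_smul]; exact subset_span (mem_range_self (⟨i, hi⟩ : I))⟩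
    · simpa [N, image_eq_range s I, Function.comp_def] using hI i hi
  choose a ha ha' using exists_a
  let A := ∏ i, a i
  have hA : A ≠ 0 := by
    rw [Finset.prod_ne_zero_iff]
    simpa using ha
  let φ : M →ₗ[R] M := LinearMap.lsmul R M A
  have hφker : LinearMap.ker φ = ⊥ := LinearMap.ker_lsmul hA
  let ψ := LinearEquiv.ofInjective φ (LinearMap.ker_eq_bot.mp hφker)
  have hle : LinearMap.range φ ≤ N := by
    suffices ∀ i, φ (s i) ∈ N by
      rw [LinearMap.range_eq_map, ← hs, map_span_le]
      rintro _ ⟨i, rfl⟩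
      apply this
    intro i
    calc
      (∏ j ∈ {i}ᶜ, a j) • a i • s i ∈ N := N.smul_mem _ (ha' i)
      _ = (∏ j, a j) • s i := by rw [Fintype.prod_eq_prod_compl_mul i, mul_smul]
  -- range φ is finitely generated
  have hKfg : (LinearMap.range φ).FG := by
    rw [LinearMap.range_eq_map]
    exact Submodule.FG.map _ (Module.Finite.iff_fg.mp inferInstance)
  -- transfer to a submodule of N
  let K' : Submodule R N := (LinearMap.range φ).comap N.subtype
  have eK : K' ≃ₗ[R] LinearMap.range φ := Submodule.comapSubtypeEquivOfLe hle
  haveI : Module.Finite R (LinearMap.range φ) := Module.Finite.iff_fg.mpr hKfg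
  haveI : Module.Finite R K' := Module.Finite.equiv eK.symm
  have hK'fg : K'.FG := Module.Finite.iff_fg.mp inferInstance
  haveI : Module.Free R K' := free_of_fg_of_basis sI_basis K' hK'fg
  haveI : Module.Free R (LinearMap.range φ) := Module.Free.of_equiv eK
  exact Module.Free.of_equiv ψ.symm
end

section
/- Let R be a Bézout domain embedded via an injective ring homomorphism 𝓛 into the ring 𝒪 of entire functions, and suppose 𝓛 maps every non-unit of R to a non-unit of 𝒪 (i.e. to an entire function with a zero). Then for every finitely presented R-module Σ: Σ is torsion free if and only if 𝒪 ⊗_R Σ is torsion free. -/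
open TensorProduct

/-- The ring of entire functions, as a subring of `ℂ → ℂ`. -/
def EntireSubring : Subring (ℂ → ℂ) where
  carrier := {f | Differentiable ℂ f}
  mul_mem' hf hg := hf.mul hg
  add_mem' hf hg := hf.add hg
  one_mem' := differentiable_const 1
  zero_mem' := differentiable_const 0
  neg_mem' hf := hf.neg

section DomainInstance

lemma entire_domain_aux : ∀ (f g : EntireSubring), f * g = 0 → f = 0 ∨ g = 0 := by
  rintro ⟨f, hf⟩ ⟨g, hg⟩ h
  rw [Subtype.ext_iff] at h
  simp only [Subring.coe_mul, Subring.coe_zero] at h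
  rw [or_iff_not_imp_left]
  intro hfne
  rw [Subtype.ext_iff] at hfne
  simp only [Subring.coe_zero] at hfne
  obtain ⟨z₀, hz₀⟩ : ∃ z, f z ≠ 0 := by
    by_contra hc
    push_neg at hc
    exact hfne (funext fun z => hc z)
  have hga : AnalyticOnNhd ℂ g Set.univ := fun z _ => hg.analyticAt z
  have hev : g =ᶠ[nhds z₀] 0 := by
    have hcont : ContinuousAt f z₀ := hf.continuous.continuousAt
    have : ∀ᶠ z in nhds z₀, f z ≠ 0 := hcont.eventually_ne hz₀
    filter_upwards [this] with z hz
    have := congrFun h z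
    simp only [Pi.mul_apply, Pi.zero_apply] at this
    have := mul_eq_zero.mp this
    tauto
  have := hga.eqOn_zero_of_preconnected_of_eventuallyEq_zero isPreconnected_univ
    (Set.mem_univ z₀) hev
  exact Subtype.ext (funext fun z => this (Set.mem_univ z))

instance : IsDomain EntireSubring := by
  have : Nontrivial EntireSubring := by
    refine ⟨1, 0, ?_⟩
    intro h
    rw [Subtype.ext_iff] at h
    exact one_ne_zero (congrFun h 0)
  have : NoZeroDivisors EntireSubring :=
    ⟨fun {a b} h => entire_domain_aux a b h⟩
  exact NoZeroDivisors.to_isDomain _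

end DomainInstance

universe u v

section Bezout

variable (R : Type u) [CommRing R] [IsDomain R] [IsBezout R]

theorem free_of_fg_inj :
    ∀ (n : ℕ) (M : Type v) [AddCommGroup M] [Module R M] [Module.Finite R M]
      (f : M →ₗ[R] (Fin n → FractionRing R)), Function.Injective f → Module.Free R M := by
  intro n
  induction n with
  | zero =>
    intro M _ _ _ f hf
    have : Subsingleton M := ⟨fun a b => hf (Subsingleton.elim _ _)⟩
    exact Module.Free.of_subsingleton R M
  | succ n ih =>
    intro M _ _ _ f hf
    set K := FractionRing R with hK
    have halg : Function.Injective (algebraMap R K) := IsFractionRing.injective R K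
    let π : M →ₗ[R] K := (LinearMap.proj 0).comp f
    have hrfg : (LinearMap.range π).FG := by
      rw [← Submodule.map_top]
      exact (Module.finite_def.mp ‹Module.Finite R M›).map π
    obtain ⟨s, hs⟩ := hrfg
    obtain ⟨b, hb⟩ := IsLocalization.exist_integer_multiples_of_finset (nonZeroDivisors R) s
    have hbne : (b : R) ≠ 0 := nonZeroDivisors.ne_zero b.2
    let π' : M →ₗ[R] K := (b : R) • π
    have hcancel : ∀ m : M, π' m = 0 → π m = 0 := by
      intro m hm
      have hm' : algebraMap R K b * π m = 0 := by
        rw [← Algebra.smul_def]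
        exact hm
      rcases mul_eq_zero.mp hm' with h | h
      · exact absurd (halg (h.trans (map_zero _).symm)) hbne
      · exact h
    have hint : ∀ m : M, IsLocalization.IsInteger R (π' m) := by
      intro m
      have hmem : π m ∈ Submodule.span R (s : Set K) := by
        rw [hs]; exact LinearMap.mem_range.mpr ⟨m, rfl⟩
      have : IsLocalization.IsInteger R ((b : R) • π m) := by
        refine Submodule.span_induction (fun x hx => hb x hx) ?_ ?_ ?_ hmem
        · rw [smul_zero]; exact IsLocalization.isInteger_zero
        · intro x y _ _ hx hy
          rw [smul_add]; exact IsLocalization.isInteger_add hx hy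
        · intro r x _ hx
          rw [smul_comm]; exact IsLocalization.isInteger_smul hx
      exact this
    let I : Ideal R := Submodule.comap (Algebra.linearMap R K) (LinearMap.range π')
    have hImap : Submodule.map (Algebra.linearMap R K) I = LinearMap.range π' := by
      apply le_antisymm
      · rw [Submodule.map_le_iff_le_comap]
      · rintro y ⟨m, rfl⟩
        obtain ⟨r, hr⟩ := hint m
        exact Submodule.mem_map.mpr ⟨r, Submodule.mem_comap.mpr
          (by rw [Algebra.linearMap_apply, hr]; exact LinearMap.mem_range.mpr ⟨m, rfl⟩),
          by rw [Algebra.linearMap_apply, hr]⟩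
    have hIfg : I.FG := by
      apply Submodule.fg_of_fg_map_injective (Algebra.linearMap R K) halg
      rw [hImap, ← Submodule.map_top]
      exact (Module.finite_def.mp ‹Module.Finite R M›).map π'
    obtain ⟨d, hd⟩ := (IsBezout.isPrincipal_of_FG I hIfg).principal
    by_cases hd0 : d = 0
    · -- range π' = ⊥, so f maps into "tail" coordinates
      have hπ'0 : ∀ m : M, π' m = 0 := by
        intro m
        have : π' m ∈ LinearMap.range π' := LinearMap.mem_range.mpr ⟨m, rfl⟩
        rw [← hImap, hd, hd0] at this
        simp only [Submodule.span_zero_singleton, Submodule.map_bot, Submodule.mem_bot] at this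
        exact this
      have hπ0 : ∀ m : M, π m = 0 := fun m => hcancel m (hπ'0 m)
      let g : M →ₗ[R] (Fin n → K) := (LinearMap.funLeft R K Fin.succ).comp f
      have hg : Function.Injective g := by
        intro m m' hmm
        apply hf
        funext i
        induction i using Fin.cases with
        | zero =>
          have h1 : f m 0 = 0 := hπ0 m
          have h2 : f m' 0 = 0 := hπ0 m'
          rw [h1, h2]
        | succ i =>
          exact congrFun hmm i
      exact ih M g hg
    · -- d ≠ 0 : split off a free rank-one part
      have hdI : d ∈ I := by rw [hd]; exact Ideal.subset_span rfl
      obtain ⟨x, hx⟩ : ∃ m : M, π' m = algebraMap R K d := by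
        obtain ⟨m, hm⟩ := LinearMap.mem_range.mp (Submodule.mem_comap.mp hdI)
        exact ⟨m, by rw [hm, Algebra.linearMap_apply]⟩
      let Kr := LinearMap.ker π'
      let e : (Kr × R) →ₗ[R] M := Kr.subtype.coprod (LinearMap.toSpanSingleton R M x)
      have he_apply : ∀ (k : Kr) (c : R), e (k, c) = (k : M) + c • x := fun k c => rfl
      have hesurj : Function.Surjective e := by
        intro m
        obtain ⟨r, hr⟩ := hint m
        have hrI : r ∈ I := Submodule.mem_comap.mpr
          (by rw [Algebra.linearMap_apply, hr]; exact LinearMap.mem_range.mpr ⟨m, rfl⟩)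
        rw [hd] at hrI
        obtain ⟨c, hc⟩ := Ideal.mem_span_singleton'.mp hrI
        have hker : m - c • x ∈ Kr := by
          rw [LinearMap.mem_ker, map_sub, map_smul, hx, ← hr, ← hc, map_mul,
            Algebra.smul_def, sub_self]
        refine ⟨(⟨m - c • x, hker⟩, c), ?_⟩
        rw [he_apply]
        simp
      have heinj : Function.Injective e := by
        rw [← LinearMap.ker_eq_bot]
        rw [LinearMap.ker_eq_bot']
        rintro ⟨k, c⟩ hkc
        rw [he_apply] at hkc
        have h2 : π' ((k : M) + c • x) = 0 := by rw [hkc, map_zero]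
        rw [map_add, LinearMap.mem_ker.mp k.2, map_smul, hx, zero_add,
          Algebra.smul_def, ← map_mul] at h2
        have hcd : c * d = 0 := halg (h2.trans (map_zero _).symm)
        have hc : c = 0 := by
          rcases mul_eq_zero.mp hcd with h | h
          · exact h
          · exact absurd h hd0
        subst hc
        rw [zero_smul, add_zero] at hkc
        have hk : k = 0 := Subtype.ext hkc
        rw [hk]
        rfl
      let E := LinearEquiv.ofBijective e ⟨heinj, hesurj⟩
      have hKrFin : Module.Finite R Kr := by
        refine Module.Finite.of_surjective
          ((LinearMap.fst R Kr R).comp (E.symm : M →ₗ[R] Kr × R)) ?_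
        intro k
        exact ⟨E (k, 0), by simp⟩
      have hKrFree : Module.Free R Kr := by
        refine ih Kr ((LinearMap.funLeft R K Fin.succ).comp (f.comp Kr.subtype)) ?_
        rw [← LinearMap.ker_eq_bot, LinearMap.ker_eq_bot']
        intro k hk
        have hfk : f (k : M) = 0 := by
          funext i
          induction i using Fin.cases with
          | zero => exact hcancel _ (LinearMap.mem_ker.mp k.2)
          | succ i => exact congrFun hk i
        have : (k : M) = 0 := hf (by rw [hfk, map_zero])
        exact Subtype.ext this
      exact Module.Free.of_equiv E

theorem free_of_fg_torsionFree (M : Type v) [AddCommGroup M] [Module R M] [Module.Finite R M]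
    (htf : Submodule.torsion R M = ⊥) : Module.Free R M := by
  classical
  set K := FractionRing R with hK
  let V := LocalizedModule (nonZeroDivisors R) M
  have hbc : IsBaseChange K (LocalizedModule.mkLinearMap (nonZeroDivisors R) M) :=
    IsLocalizedModule.isBaseChange (nonZeroDivisors R) K _
  have hfin : Module.Finite K V := Module.Finite.of_surjective
    (hbc.equiv.toLinearMap) hbc.equiv.surjective
  let bas := Module.finBasis K V
  let g : V ≃ₗ[R] (Fin (Module.finrank K V) → K) := (bas.equivFun).restrictScalars R
  let f : M →ₗ[R] (Fin (Module.finrank K V) → K) :=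
    (g : V →ₗ[R] _).comp (LocalizedModule.mkLinearMap (nonZeroDivisors R) M)
  refine free_of_fg_inj R (Module.finrank K V) M f ?_
  rw [← LinearMap.ker_eq_bot, LinearMap.ker_eq_bot']
  intro m hm
  have h1 : LocalizedModule.mkLinearMap (nonZeroDivisors R) M m = 0 := by
    apply g.injective
    rw [map_zero]
    exact hm
  obtain ⟨r, hr, hrm⟩ := LocalizedModule.mem_ker_mkLinearMap_iff.mp
    (LinearMap.mem_ker.mpr h1)
  have : m ∈ Submodule.torsion R M := ⟨⟨r, hr⟩, hrm⟩
  rw [htf] at this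
  exact this

end Bezout

set_option synthInstance.maxHeartbeats 400000 in
set_option maxHeartbeats 2000000 in
theorem stmt_16 (R : Type*) [CommRing R] [IsDomain R] [IsBezout R]
    [Algebra R EntireSubring]
    (hinj : Function.Injective (algebraMap R EntireSubring))
    (hnu : ∀ r : R, ¬ IsUnit r → ¬ IsUnit (algebraMap R EntireSubring r))
    (M : Type*) [AddCommGroup M] [Module R M] [Module.FinitePresentation R M] :
    Submodule.torsion R M = ⊥ ↔
      Submodule.torsion EntireSubring ((EntireSubring : Type) ⊗[R] M) = ⊥ := by
  classical
  constructor
  · -- forward direction: M torsion free ⇒ M free ⇒ base change free ⇒ torsion free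
    intro h
    have hfree : Module.Free R M := free_of_fg_torsionFree R M h
    have hOfree : Module.Free EntireSubring ((EntireSubring : Type) ⊗[R] M) := inferInstance
    have hnz : Module.IsTorsionFree EntireSubring ((EntireSubring : Type) ⊗[R] M) :=
      (hOfree.chooseBasis).isTorsionFree
    exact Submodule.isTorsionFree_iff_torsion_eq_bot.mp hnz
  · -- backward direction
    intro h
    by_contra hT
    set T := Submodule.torsion R M with hTdef
    -- M ⧸ T is finite and torsion free, hence free
    have hFtf : Submodule.torsion R (M ⧸ T) = ⊥ :=
      Submodule.isTorsionFree_iff_torsion_eq_bot.mp inferInstance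
    have hFfree : Module.Free R (M ⧸ T) := free_of_fg_torsionFree R _ hFtf
    -- split the surjection M → M ⧸ T
    obtain ⟨s, hs⟩ := Module.projective_lifting_property T.mkQ
      (LinearMap.id : (M ⧸ T) →ₗ[R] (M ⧸ T)) (Submodule.mkQ_surjective T)
    have hs' : ∀ y : M ⧸ T, T.mkQ (s y) = y := fun y => LinearMap.congr_fun hs y
    let e : (T × (M ⧸ T)) →ₗ[R] M := T.subtype.coprod s
    have he_apply : ∀ (t : T) (y : M ⧸ T), e (t, y) = (t : M) + s y := fun _ _ => rfl
    have hesurj : Function.Surjective e := by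
      intro m
      have hker : m - s (T.mkQ m) ∈ T := by
        have hz : T.mkQ (m - s (T.mkQ m)) = 0 := by rw [map_sub, hs', sub_self]
        rwa [Submodule.mkQ_apply, Submodule.Quotient.mk_eq_zero] at hz
      refine ⟨(⟨m - s (T.mkQ m), hker⟩, T.mkQ m), ?_⟩
      rw [he_apply]
      simp
    have heinj : Function.Injective e := by
      rw [← LinearMap.ker_eq_bot, LinearMap.ker_eq_bot']
      rintro ⟨t, y⟩ hty
      rw [he_apply] at hty
      have h2 : T.mkQ ((t : M) + s y) = 0 := by rw [hty, map_zero]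
      have ht0 : T.mkQ (t : M) = 0 := (Submodule.Quotient.mk_eq_zero T).mpr t.2
      rw [map_add, ht0, zero_add, hs'] at h2
      subst h2
      rw [map_zero, add_zero] at hty
      have ht : t = 0 := Subtype.ext hty
      rw [ht]
      rfl
    let Esp := LinearEquiv.ofBijective e ⟨heinj, hesurj⟩
    have hTnt : Nontrivial T := Submodule.nontrivial_iff_ne_bot.mpr hT
    let pr : M →ₗ[R] T := (LinearMap.fst R T (M ⧸ T)).comp (Esp.symm : M →ₗ[R] T × (M ⧸ T))
    have hprsurj : Function.Surjective pr := by
      intro t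
      refine ⟨Esp (t, 0), ?_⟩
      show (Esp.symm (Esp (t, 0))).1 = t
      rw [Esp.symm_apply_apply]
    have hTfin : Module.Finite R T := Module.Finite.of_surjective pr hprsurj
    have hTfp : Module.FinitePresentation R T := by
      refine Module.finitePresentation_of_surjective pr hprsurj ?_
      have hker : LinearMap.ker pr = LinearMap.range s := by
        ext m
        simp only [LinearMap.mem_ker, LinearMap.mem_range]
        constructor
        · intro h0
          refine ⟨(Esp.symm m).2, ?_⟩
          have h1 : (Esp.symm m).1 = 0 := h0
          have hm : m = e ((Esp.symm m).1, (Esp.symm m).2) := (Esp.apply_symm_apply m).symm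
          conv_rhs => rw [hm]
          rw [he_apply, h1]
          simp
        · rintro ⟨y, rfl⟩
          have : Esp ((0 : T), y) = s y := by
            show e (0, y) = s y
            rw [he_apply]
            simp
          show (Esp.symm (s y)).1 = 0
          rw [← this, Esp.symm_apply_apply]
      rw [hker, ← Submodule.map_top]
      exact (Module.finite_def.mp inferInstance).map s
    -- minimal number of generators for T
    obtain ⟨n₀, v₀, hv₀⟩ := Module.Finite.exists_fin (R := R) (M := T)
    have hex : ∃ n : ℕ, ∃ v : Fin n → T, Submodule.span R (Set.range v) = ⊤ := ⟨n₀, v₀, hv₀⟩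
    obtain ⟨v, hv⟩ := Nat.find_spec hex
    have hkne : Nat.find hex ≠ 0 := by
      intro h0
      obtain ⟨t, t', htt'⟩ := hTnt
      apply htt'
      have hbot : (⊤ : Submodule R T) = ⊥ := by
        rw [← hv]
        have : Set.range v = ∅ := by
          rw [Set.range_eq_empty_iff]
          rw [h0]
          exact Fin.isEmpty'
        rw [this, Submodule.span_empty]
      have h1 : t ∈ (⊥ : Submodule R T) := hbot ▸ Submodule.mem_top
      have h2 : t' ∈ (⊥ : Submodule R T) := hbot ▸ Submodule.mem_top
      rw [Submodule.mem_bot] at h1 h2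
      rw [h1, h2]
    obtain ⟨k', hk'⟩ := Nat.exists_eq_succ_of_ne_zero hkne
    -- N: span of all but the first generator
    let w : Fin (k' + 1) → T := v ∘ (finCongr hk'.symm)
    have hw : Submodule.span R (Set.range w) = ⊤ := by
      rw [show Set.range w = Set.range v from (finCongr hk'.symm).surjective.range_comp v, hv]
    let N : Submodule R T := Submodule.span R (Set.range (w ∘ Fin.succ))
    have hNne : N ≠ ⊤ := by
      intro hNtop
      have : ∃ u : Fin k' → T, Submodule.span R (Set.range u) = ⊤ := ⟨w ∘ Fin.succ, hNtop⟩
      have := Nat.find_min hex (by omega : k' < Nat.find hex) this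
      exact this
    have hCnt : Nontrivial (T ⧸ N) :=
      Submodule.Quotient.nontrivial_iff.mpr hNne
    have hCfp : Module.FinitePresentation R (T ⧸ N) := by
      refine Module.finitePresentation_of_surjective N.mkQ (Submodule.mkQ_surjective N) ?_
      rw [Submodule.ker_mkQ]
      exact Submodule.fg_span (Set.finite_range _)
    -- T ⧸ N is cyclic, generated by the class of w 0
    have hCspan : Submodule.span R {N.mkQ (w 0)} = ⊤ := by
      have h1 : (⊤ : Submodule R (T ⧸ N)) = Submodule.map N.mkQ ⊤ := by
        rw [Submodule.map_top, Submodule.range_mkQ]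
      rw [h1, ← hw, Submodule.map_span]
      apply le_antisymm
      · apply Submodule.span_le.mpr
        rintro _ rfl
        exact Submodule.subset_span ⟨w 0, ⟨0, rfl⟩, rfl⟩
      · apply Submodule.span_le.mpr
        rintro _ ⟨_, ⟨i, rfl⟩, rfl⟩
        induction i using Fin.cases with
        | zero => exact Submodule.mem_span_singleton_self _
        | succ j =>
          have : w j.succ ∈ N := Submodule.subset_span ⟨j, rfl⟩
          have h0 : N.mkQ (w j.succ) = 0 := (Submodule.Quotient.mk_eq_zero N).mpr this
          rw [h0]
          exact Submodule.zero_mem _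
    let q : R →ₗ[R] (T ⧸ N) := LinearMap.toSpanSingleton R (T ⧸ N) (N.mkQ (w 0))
    have hqsurj : Function.Surjective q := by
      rw [← LinearMap.range_eq_top, ← LinearMap.span_singleton_eq_range, hCspan]
    let J : Ideal R := LinearMap.ker q
    have hJfg : J.FG := Module.FinitePresentation.fg_ker q hqsurj
    obtain ⟨d, hd⟩ := (IsBezout.isPrincipal_of_FG J hJfg).principal
    have hdnu : ¬ IsUnit d := by
      intro hdu
      have hJtop : J = ⊤ := by
        rw [hd]
        exact Ideal.span_singleton_eq_top.mpr hdu
      obtain ⟨c, c', hcc'⟩ := hCnt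
      apply hcc'
      obtain ⟨r, rfl⟩ := hqsurj c
      obtain ⟨r', rfl⟩ := hqsurj c'
      have hr1 : r ∈ J := by rw [hJtop]; exact Submodule.mem_top
      have hr2 : r' ∈ J := by rw [hJtop]; exact Submodule.mem_top
      have h1 : q r = 0 := LinearMap.mem_ker.mp hr1
      have h2 : q r' = 0 := LinearMap.mem_ker.mp hr2
      rw [h1, h2]
    -- EntireSubring ⊗ (T ⧸ N) is nontrivial
    let EC : (T ⧸ N) ≃ₗ[R] (R ⧸ J) := (q.quotKerEquivOfSurjective hqsurj).symm
    let e1 : ((EntireSubring : Type) ⊗[R] (T ⧸ N)) ≃ₗ[R] ((EntireSubring : Type) ⊗[R] (R ⧸ J)) :=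
      TensorProduct.congr (LinearEquiv.refl R (EntireSubring : Type)) EC
    let e2 := TensorProduct.tensorQuotEquivQuotSMul (EntireSubring : Type) J
    have hsmul_ne : (J • (⊤ : Submodule R (EntireSubring : Type))) ≠ ⊤ := by
      intro htop
      have hle : J • (⊤ : Submodule R (EntireSubring : Type)) ≤
          (Ideal.span {algebraMap R EntireSubring d}).restrictScalars R := by
        apply Submodule.smul_le.mpr
        intro r hr x _
        rw [hd] at hr
        obtain ⟨c, hc⟩ := Ideal.mem_span_singleton'.mp hr
        show r • x ∈ Ideal.span {algebraMap R EntireSubring d}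
        rw [Algebra.smul_def, ← hc, map_mul]
        exact Ideal.mem_span_singleton'.mpr ⟨algebraMap R EntireSubring c * x, by ring⟩
      have hmem1 : (1 : EntireSubring) ∈ J • (⊤ : Submodule R (EntireSubring : Type)) := by
        rw [htop]; exact Submodule.mem_top
      have h1 : (1 : EntireSubring) ∈ Ideal.span {algebraMap R EntireSubring d} := hle hmem1
      exact hnu d hdnu (Ideal.span_singleton_eq_top.mp
        ((Ideal.eq_top_iff_one _).mpr h1))
    have hCOnt : Nontrivial ((EntireSubring : Type) ⊗[R] (T ⧸ N)) := by
      have hq : Nontrivial ((EntireSubring : Type) ⧸ (J • (⊤ : Submodule R (EntireSubring : Type)))) :=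
        Submodule.Quotient.nontrivial_iff.mpr hsmul_ne
      exact (e1 ≪≫ₗ e2).toEquiv.nontrivial
    -- get a nonzero element of EntireSubring ⊗ T
    have hsurjTC : Function.Surjective (LinearMap.lTensor (EntireSubring : Type) N.mkQ) :=
      LinearMap.lTensor_surjective _ (Submodule.mkQ_surjective N)
    obtain ⟨c1, c2, hcne⟩ := hCOnt
    obtain ⟨ξ, hξ⟩ := hsurjTC (c1 - c2)
    have hξne : ξ ≠ 0 := by
      intro h0
      rw [h0, map_zero] at hξ
      exact hcne (sub_eq_zero.mp hξ.symm)
    -- a nonzero r ∈ R annihilating T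
    have hvtor : ∀ i : Fin (k' + 1), ∃ a : R, a ∈ nonZeroDivisors R ∧ a • w i = 0 := by
      intro i
      obtain ⟨a, ha⟩ := (Submodule.mem_torsion_iff _).mp (w i).2
      refine ⟨(a : R), a.2, Subtype.ext ?_⟩
      simpa [Submonoid.smul_def] using ha
    choose a ha1 ha2 using hvtor
    let r : R := ∏ i, a i
    have hrne : r ≠ 0 := by
      rw [Finset.prod_ne_zero_iff]
      intro i _
      exact nonZeroDivisors.ne_zero (ha1 i)
    have hrT : ∀ t : T, r • t = 0 := by
      intro t
      have hmem : t ∈ Submodule.span R (Set.range w) := hw ▸ Submodule.mem_top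
      refine Submodule.span_induction ?_ ?_ ?_ ?_ hmem
      · rintro _ ⟨i, rfl⟩
        have : r = (∏ j ∈ Finset.univ.erase i, a j) * a i :=
          (Finset.prod_erase_mul _ _ (Finset.mem_univ i)).symm
        rw [this, mul_smul, ha2 i, smul_zero]
      · exact smul_zero r
      · intro x y _ _ hx hy
        rw [smul_add, hx, hy, add_zero]
      · intro c x _ hx
        rw [smul_comm, hx, smul_zero]
    have hrξ : ∀ z : (EntireSubring : Type) ⊗[R] T, r • z = 0 := by
      intro z
      induction z using TensorProduct.induction_on with
      | zero => exact smul_zero r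
      | tmul x t =>
        rw [← TensorProduct.tmul_smul, hrT t, TensorProduct.tmul_zero]
      | add x y hx hy =>
        rw [smul_add, hx, hy, add_zero]
    -- inject EntireSubring ⊗ T into EntireSubring ⊗ M
    let ι := LinearMap.lTensor (EntireSubring : Type) T.subtype
    have hlinv : pr ∘ₗ T.subtype = LinearMap.id := by
      ext t
      have h1 : Esp (t, 0) = (t : M) := by
        show e (t, 0) = (t : M)
        rw [he_apply]
        simp
      have h2 : pr ((t : M)) = t := by
        show (Esp.symm ((t : M))).1 = t
        rw [← h1, Esp.symm_apply_apply]
      show ((pr ((t : M)) : T) : M) = ((t : T) : M)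
      rw [h2]
    have hιinj : Function.Injective ι := by
      have hli : Function.LeftInverse (LinearMap.lTensor (EntireSubring : Type) pr) ι := by
        intro z
        show (LinearMap.lTensor (EntireSubring : Type) pr ∘ₗ
          LinearMap.lTensor (EntireSubring : Type) T.subtype) z = z
        rw [← LinearMap.lTensor_comp, hlinv, LinearMap.lTensor_id]
        rfl
      exact hli.injective
    set ζ := ι ξ with hζdef
    have hζne : ζ ≠ 0 := by
      intro h0
      apply hξne
      apply hιinj
      rw [← hζdef, h0, map_zero]
    have hζtor : ζ ∈ Submodule.torsion EntireSubring ((EntireSubring : Type) ⊗[R] M) := by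
      refine (Submodule.mem_torsion_iff _).mpr
        ⟨⟨algebraMap R EntireSubring r, mem_nonZeroDivisors_of_ne_zero ?_⟩, ?_⟩
      · intro h0
        exact hrne (hinj (by rw [h0, map_zero]))
      · show (algebraMap R EntireSubring r) • ζ = 0
        rw [algebraMap_smul, hζdef, ← map_smul, hrξ, map_zero]
    rw [h] at hζtor
    exact hζne (Submodule.mem_bot _ |>.mp hζtor)
end
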